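/- arXiv:2303.16968 — 4 statements merged into one kernel-verified Lean document; each statement's English description precedes it below -/
import Mathlib

section
/- Suppose r ≥ 1. For every nonempty subset I ⊆ {1, …, r}, the ideal P_I = ∏_{i∈I} Pᵢ is not well-rounded. -/
open NumberField

/-- Squared length of an element of a totally real cubic field under the Minkowski
embedding: `‖x‖² = Tr_{F/ℚ}(x²)`. -/
noncomputable def cubicLenSq (K : Type*) [Field K] [NumberField K] (x : K) : ℚ :=
  Algebra.trace ℚ K (x * x)

/-- `v` is a nonzero element of the ideal `I` of minimal squared length. -/
def IsMinimalVector (K : Type*) [Field K] [NumberField K]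
    (I : Ideal (𝓞 K)) (v : 𝓞 K) : Prop :=
  v ∈ I ∧ v ≠ 0 ∧ ∀ w : 𝓞 K, w ∈ I → w ≠ 0 → cubicLenSq K (v : K) ≤ cubicLenSq K (w : K)

/-- An ideal of the ring of integers of a cubic field is well-rounded if its set of
nonzero elements of minimal squared length contains three `ℚ`-linearly independent
elements. -/
def IsWellRounded3 (K : Type*) [Field K] [NumberField K] (I : Ideal (𝓞 K)) : Prop :=
  ∃ v₁ v₂ v₃ : 𝓞 K, IsMinimalVector K I v₁ ∧ IsMinimalVector K I v₂ ∧
    IsMinimalVector K I v₃ ∧ LinearIndependent ℚ ![(v₁ : K), (v₂ : K), (v₃ : K)]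

section Aux

open NumberField

/-- Invariance of the trace form under an automorphism. -/
theorem trInvAux (K : Type) [Field K] [NumberField K] [IsGalois ℚ K]
    (σ : K ≃ₐ[ℚ] K) (y : K) : Algebra.trace ℚ K (σ y) = Algebra.trace ℚ K y := by
  apply (algebraMap ℚ K).injective
  rw [trace_eq_sum_automorphisms, trace_eq_sum_automorphisms]
  exact Fintype.sum_bijective (· * σ) (Group.mulRight_bijective σ) _ _ (fun g => rfl)

/-- The trace as the sum over the Galois group of order 3. -/
theorem trSumAux (K : Type) [Field K] [NumberField K] [IsGalois ℚ K]
    (hdim : Module.finrank ℚ K = 3) (σ : K ≃ₐ[ℚ] K) (hσ1 : σ ≠ 1) (hσ3 : σ ^ 3 = 1)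
    (y : K) : algebraMap ℚ K (Algebra.trace ℚ K y) = y + σ y + σ (σ y) := by
  classical
  have hcard : Fintype.card (K ≃ₐ[ℚ] K) = 3 := by
    rw [← Nat.card_eq_fintype_card, IsGalois.card_aut_eq_finrank, hdim]
  have hσ21 : σ ^ 2 ≠ σ := by
    intro h
    apply hσ1
    have : σ * σ = σ * 1 := by rw [mul_one]; rw [pow_two] at h; exact h
    exact mul_left_cancel this
  have hσ2 : σ ^ 2 ≠ 1 := by
    intro h
    apply hσ21
    have h3 : σ * (σ ^ 2) = 1 := by rw [← pow_succ']; exact hσ3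
    rw [h, mul_one] at h3
    rw [h, h3]
  have huniv : (Finset.univ : Finset (K ≃ₐ[ℚ] K)) = {(1 : K ≃ₐ[ℚ] K), σ, σ ^ 2} := by
    symm
    apply Finset.eq_univ_of_card
    rw [hcard]
    rw [Finset.card_insert_of_notMem (by simp [hσ1.symm, hσ2.symm]),
      Finset.card_insert_of_notMem (by simp [Ne.symm hσ21]), Finset.card_singleton]
  rw [trace_eq_sum_automorphisms, huniv]
  rw [Finset.sum_insert (by simp [hσ1.symm, hσ2.symm]), Finset.sum_insert (by simp [Ne.symm hσ21])]
  simp [pow_two, add_assoc]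

/-- A ring automorphism fixes a prime whose cube is generated by a rational integer. -/
theorem fixAux {R : Type*} [CommRing R] (τ : R ≃ₐ[ℤ] R) (P : Ideal R) (hP : P.IsPrime)
    (c : ℕ) (hc : Ideal.span {(c : R)} = P ^ 3) :
    Ideal.map (τ : R →+* R) P = P := by
  have key : ∀ (g : R ≃ₐ[ℤ] R), P ≤ Ideal.map (g : R →+* R) P := by
    intro g
    have hprime : (Ideal.map (g : R →+* R) P).IsPrime :=
      Ideal.map_isPrime_of_equiv (g : R ≃+* R)
    intro x hx
    have hx3 : x ^ 3 ∈ P ^ 3 := Ideal.pow_mem_pow hx 3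
    rw [← hc, Ideal.mem_span_singleton] at hx3
    obtain ⟨d, hd⟩ := hx3
    have hcP : (c : R) ∈ P := by
      have h1 : (c : R) ∈ P ^ 3 := by rw [← hc]; exact Ideal.mem_span_singleton_self _
      exact (Ideal.pow_le_self (by norm_num)) h1
    have hcmap : (c : R) ∈ Ideal.map (g : R →+* R) P := by
      have h2 := Ideal.mem_map_of_mem (g : R →+* R) hcP
      simpa using h2
    have h3 : x ^ 3 ∈ Ideal.map (g : R →+* R) P := by
      rw [hd]; exact Ideal.mul_mem_right _ _ hcmap
    exact hprime.mem_of_pow_mem 3 h3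
  apply le_antisymm
  · have h2 := key τ.symm
    have h3 : Ideal.map (τ : R →+* R) P ≤
        Ideal.map (τ : R →+* R) (Ideal.map (τ.symm : R →+* R) P) := Ideal.map_mono h2
    rwa [Ideal.map_map, show ((τ : R →+* R).comp (τ.symm : R →+* R)) = RingHom.id R by
      ext z; simp, Ideal.map_id] at h3
  · exact key τ

/-- An automorphism fixing a prime of prime residue characteristic with trivial
residue extension is trivial modulo the prime. -/
theorem residAux {R : Type*} [CommRing R] (τ : R ≃ₐ[ℤ] R) (P : Ideal R) (hP : P.IsPrime)
    (q : ℕ) (hq : q.Prime) (hcard : Nat.card (R ⧸ P) = q)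
    (hfix : Ideal.map (τ : R →+* R) P = P) (x : R) : τ x - x ∈ P := by
  classical
  haveI : Finite (R ⧸ P) := Nat.finite_of_card_ne_zero (by rw [hcard]; exact hq.ne_zero)
  have hone : (1 : R ⧸ P) ≠ 0 := by
    intro h
    exact hP.ne_top ((Ideal.eq_top_iff_one P).mpr (Ideal.Quotient.eq_zero_iff_mem.mp h))
  have hsurj : ∀ u : R ⧸ P, ∃ k : ℤ, u = (k : R ⧸ P) := by
    intro u
    set A := AddSubgroup.zmultiples (1 : R ⧸ P) with hA
    have hdvd : Nat.card A ∣ q := by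
      rw [← hcard]; exact AddSubgroup.card_addSubgroup_dvd_card A
    have hne1 : Nat.card A ≠ 1 := by
      intro h
      have hbot : A = ⊥ := AddSubgroup.eq_bot_of_card_eq A h
      have h1 : (1 : R ⧸ P) ∈ A := AddSubgroup.mem_zmultiples _
      rw [hbot] at h1
      exact hone (by simpa using h1)
    have hcardA : Nat.card A = q := ((Nat.Prime.eq_one_or_self_of_dvd hq _ hdvd).resolve_left hne1)
    have hAtop : A = ⊤ := AddSubgroup.eq_top_of_card_eq A (by rw [hcardA, hcard])
    have hu : u ∈ A := by rw [hAtop]; trivial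
    obtain ⟨k, hk⟩ := AddSubgroup.mem_zmultiples_iff.mp hu
    exact ⟨k, by rw [← hk, zsmul_one]⟩
  obtain ⟨k, hk⟩ := hsurj (Ideal.Quotient.mk P x)
  have hxk : x - (k : R) ∈ P := by
    rw [← Ideal.Quotient.eq_zero_iff_mem, map_sub, hk, map_intCast, sub_self]
  have hτ : τ (x - (k : R)) ∈ P := by
    rw [← hfix]
    simpa using Ideal.mem_map_of_mem (τ : R →+* R) hxk
  rw [map_sub, map_intCast] at hτ
  have h5 := P.sub_mem hτ hxk
  simpa using h5

/-- The residue cardinality of a totally ramified prime in a cubic field. -/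
theorem cardAux (K : Type) [Field K] [NumberField K]
    (hdim : Module.finrank ℚ K = 3) (P : Ideal (𝓞 K)) (c : ℕ)
    (hc : Ideal.span {(c : 𝓞 K)} = P ^ 3) : Nat.card (𝓞 K ⧸ P) = c := by
  have hb := Module.Free.chooseBasis ℤ (𝓞 K)
  have hcardb : Fintype.card (Module.Free.ChooseBasisIndex ℤ (𝓞 K)) = 3 := by
    rw [← Module.finrank_eq_card_chooseBasisIndex, NumberField.RingOfIntegers.rank, hdim]
  have h1 : Ideal.absNorm (Ideal.span {(c : 𝓞 K)}) = c ^ 3 := by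
    rw [Ideal.absNorm_span_singleton]
    have h : (c : 𝓞 K) = algebraMap ℤ (𝓞 K) (c : ℤ) := by simp
    rw [h, Algebra.norm_algebraMap_of_basis hb, hcardb]
    rw [Int.natAbs_pow, Int.natAbs_natCast]
  rw [hc, map_pow] at h1
  have h2 : Ideal.absNorm P = c := Nat.pow_left_injective (by norm_num) h1
  rw [← h2, Ideal.absNorm_apply, Submodule.cardQuot_apply]

/-- A rational element of the ring of integers is a rational integer. -/
theorem ratIntAux (K : Type) [Field K] [NumberField K] (w : 𝓞 K) (q : ℚ)
    (hq : algebraMap ℚ K q = (w : K)) : ∃ z : ℤ, (q = (z : ℚ)) ∧ ((z : 𝓞 K) = w) := by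
  have hint : IsIntegral ℤ q := by
    rw [← isIntegral_algebraMap_iff (algebraMap ℚ K).injective, hq]
    exact w.isIntegral_coe
  obtain ⟨z, hz⟩ := IsIntegrallyClosed.isIntegral_iff.mp hint
  refine ⟨z, by rw [← hz]; simp, ?_⟩
  have h2 : ((z : 𝓞 K) : K) = (w : K) := by
    rw [← hq, ← hz]
    simp
  exact_mod_cast h2

/-- A rational integer lying in a prime containing the rational prime `q`
is divisible by `q`. -/
theorem dvdAux (K : Type) [Field K] [NumberField K] (Q : Ideal (𝓞 K)) (hQ : Q ≠ ⊤)
    (q : ℕ) (hq : q.Prime) (hqQ : (q : 𝓞 K) ∈ Q) (z : ℤ) (hz : (z : 𝓞 K) ∈ Q) :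
    (q : ℤ) ∣ z := by
  by_contra hnd
  have hcop : IsCoprime (q : ℤ) z := (Nat.prime_iff_prime_int.mp hq).coprime_iff_not_dvd.mpr hnd
  obtain ⟨u, v, huv⟩ := hcop
  apply hQ
  rw [Ideal.eq_top_iff_one]
  have h1 : ((u * q + v * z : ℤ) : 𝓞 K) ∈ Q := by
    push_cast
    exact Q.add_mem (Q.mul_mem_left _ hqQ) (Q.mul_mem_left _ hz)
  rw [huv] at h1
  exact_mod_cast h1

/-- A finite product of ideals each fixed by an automorphism is fixed. -/
theorem mapProdAux {R ι : Type*} [CommRing R] (f : R ≃ₐ[ℤ] R) (s : Finset ι)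
    (Q : ι → Ideal R) (hf : ∀ i ∈ s, Ideal.map (f : R →+* R) (Q i) = Q i) :
    Ideal.map (f : R →+* R) (∏ i ∈ s, Q i) = ∏ i ∈ s, Q i := by
  classical
  induction s using Finset.induction_on with
  | empty => simpa using Ideal.map_top (f : R →+* R)
  | insert _ _ hnot ih =>
      rw [Finset.prod_insert hnot, Ideal.map_mul,
        hf _ (Finset.mem_insert_self _ _), ih (fun i hi => hf i (Finset.mem_insert_of_mem hi))]

end Aux

set_option maxHeartbeats 2000000 in
/-- With `F` the cyclic cubic field of conductor `m = 9p₁⋯p_r`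
(`r ≥ 1`) from the Hasse parametrization, for every nonempty `I ⊆ {1, …, r}` the
ideal `P_I = ∏_{i∈I} Pᵢ` is not well-rounded. -/
theorem statement3
    (K : Type) [Field K] [NumberField K] [IsGalois ℚ K]
    (hdim : Module.finrank ℚ K = 3)
    (σ : K ≃ₐ[ℚ] K) (hσ1 : σ ≠ 1) (hσ3 : σ ^ 3 = 1)
    (r : ℕ) (p : Fin r → ℕ) (hpprime : ∀ i, Nat.Prime (p i))
    (hpmod : ∀ i, p i % 3 = 1) (hpinj : Function.Injective p)
    (m : ℕ) (hm : m = 9 * ∏ i, p i)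
    (a b : ℤ) (ha : a % 9 = 6) (hb : b % 9 = 3 ∨ b % 9 = 6) (hbpos : 0 < b)
    (hab : 4 * (m : ℤ) = a ^ 2 + 3 * b ^ 2)
    (α : K) (hgen : Algebra.adjoin ℚ {α} = ⊤)
    (hα : 27 * α ^ 3 - 9 * (m : K) * α - (a : K) * (m : K) = 0)
    (P₀ : Ideal (𝓞 K)) (hP₀prime : P₀.IsPrime)
    (hP₀ram : Ideal.span {(3 : 𝓞 K)} = P₀ ^ 3)
    (P : Fin r → Ideal (𝓞 K)) (hPprime : ∀ i, (P i).IsPrime)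
    (hPram : ∀ i, Ideal.span {(p i : 𝓞 K)} = P i ^ 3)
    (hr : 1 ≤ r)
    (I : Finset (Fin r)) (hI : I.Nonempty) :
    ¬ IsWellRounded3 K (∏ i ∈ I, P i) := by
  classical
  rintro ⟨v₁, v₂, v₃, h₁, h₂, h₃, hli⟩
  set J : Ideal (𝓞 K) := ∏ i ∈ I, P i with hJ
  set n : ℕ := ∏ i ∈ I, p i with hn
  set T : K →ₗ[ℚ] ℚ := Algebra.trace ℚ K with hT
  -- basic facts about n
  have hnpos : 0 < n := Finset.prod_pos (fun i _ => (hpprime i).pos)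
  have hpne2 : ∀ i, p i ≠ 2 := by
    intro i h
    have := hpmod i
    rw [h] at this
    norm_num at this
  have hpne3 : ∀ i, p i ≠ 3 := by
    intro i h
    have := hpmod i
    rw [h] at this
    norm_num at this
  have hnodd : ¬ (2 ∣ n) := by
    intro h
    obtain ⟨i, hi, hdvd⟩ := (Nat.Prime.prime (by norm_num : Nat.Prime 2)).exists_mem_finset_dvd h
    exact hpne2 i ((Nat.prime_dvd_prime_iff_eq (by norm_num) (hpprime i)).mp hdvd).symm
  have hn3 : ¬ ((3:ℤ) ∣ (n:ℤ)) := by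
    intro h
    have h' : 3 ∣ n := by exact_mod_cast h
    obtain ⟨i, hi, hdvd⟩ := (Nat.Prime.prime (by norm_num : Nat.Prime 3)).exists_mem_finset_dvd h'
    exact hpne3 i ((Nat.prime_dvd_prime_iff_eq (by norm_num) (hpprime i)).mp hdvd).symm
  -- the Galois action on the ring of integers
  set τ : (𝓞 K) ≃ₐ[ℤ] (𝓞 K) := galRestrict ℤ ℚ K (𝓞 K) σ with hτdef
  have hτcoe : ∀ x : 𝓞 K, ((τ x : 𝓞 K) : K) = σ (x : K) :=
    fun x => algebraMap_galRestrict_apply ℤ σ x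
  have hfixP : ∀ i, Ideal.map (τ : 𝓞 K →+* 𝓞 K) (P i) = P i :=
    fun i => fixAux τ (P i) (hPprime i) (p i) (hPram i)
  have hfixP₀ : Ideal.map (τ : 𝓞 K →+* 𝓞 K) P₀ = P₀ := by
    apply fixAux τ P₀ hP₀prime 3
    rw [show ((3 : ℕ) : 𝓞 K) = (3 : 𝓞 K) by norm_cast]
    exact hP₀ram
  have hcard₀ : Nat.card (𝓞 K ⧸ P₀) = 3 := by
    apply cardAux K hdim P₀ 3
    rw [show ((3 : ℕ) : 𝓞 K) = (3 : 𝓞 K) by norm_cast]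
    exact hP₀ram
  have hres : ∀ x : 𝓞 K, τ x - x ∈ P₀ :=
    residAux τ P₀ hP₀prime 3 (by norm_num) hcard₀ hfixP₀
  have hmapJ : Ideal.map (τ : 𝓞 K →+* 𝓞 K) J = J :=
    mapProdAux τ I P (fun i _ => hfixP i)
  have hτJ : ∀ x : 𝓞 K, x ∈ J → τ x ∈ J := by
    intro x hx
    rw [← hmapJ]
    exact Ideal.mem_map_of_mem _ hx
  -- membership facts
  have hpP : ∀ i, (p i : 𝓞 K) ∈ P i := by
    intro i
    apply Ideal.pow_le_self (by norm_num : (3:ℕ) ≠ 0)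
    rw [← hPram i]
    exact Ideal.mem_span_singleton_self _
  have h3P₀ : (3 : 𝓞 K) ∈ P₀ := by
    apply Ideal.pow_le_self (by norm_num : (3:ℕ) ≠ 0)
    rw [← hP₀ram]
    exact Ideal.mem_span_singleton_self _
  have hnJ : (n : 𝓞 K) ∈ J := by
    rw [hn, Nat.cast_prod]
    exact Ideal.prod_mem_prod (fun i _ => hpP i)
  have hnne : (n : 𝓞 K) ≠ 0 := Nat.cast_ne_zero.mpr hnpos.ne'
  have hJle : ∀ i ∈ I, J ≤ P i := by
    intro i hi
    exact le_trans Ideal.prod_le_inf (Finset.inf_le hi)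
  -- divisibility of rational integers in ideals
  have hdvdn : ∀ z : ℤ, (z : 𝓞 K) ∈ J → (n : ℤ) ∣ z := by
    intro z hz
    have heach : ∀ i ∈ I, ((p i : ℕ) : ℤ) ∣ z := by
      intro i hi
      exact dvdAux K (P i) (hPprime i).ne_top (p i) (hpprime i) (hpP i) z (hJle i hi hz)
    have hcop : (↑I : Set (Fin r)).Pairwise (Function.onFun IsCoprime fun i => ((p i : ℕ) : ℤ)) := by
      intro i _ j _ hij
      have : Nat.Coprime (p i) (p j) :=
        (Nat.coprime_primes (hpprime i) (hpprime j)).mpr (fun h => hij (hpinj h))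
      exact Int.isCoprime_iff_gcd_eq_one.mpr (by simpa [Int.gcd_natCast_natCast] using this)
    have := Finset.prod_dvd_of_coprime hcop heach
    rw [hn]
    exact_mod_cast this
  have hdvd3 : ∀ z : ℤ, (z : 𝓞 K) ∈ P₀ → (3 : ℤ) ∣ z := by
    intro z hz
    have := dvdAux K P₀ hP₀prime.ne_top 3 (by norm_num) (by exact_mod_cast h3P₀) z hz
    exact_mod_cast this
  -- trace facts
  have hinv : ∀ y : K, T (σ y) = T y := fun y => trInvAux K σ y
  have htrsum : ∀ y : K, algebraMap ℚ K (T y) = y + σ y + σ (σ y) :=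
    fun y => trSumAux K hdim σ hσ1 hσ3 y
  have hσ3y : ∀ y : K, σ (σ (σ y)) = y := by
    intro y
    have : (σ ^ 3) y = (1 : K ≃ₐ[ℚ] K) y := by rw [hσ3]
    simpa [pow_succ, pow_two] using this
  -- integrality of traces
  have traceDat : ∀ w : 𝓞 K, ∃ z : ℤ, (T (w : K) = (z : ℚ)) ∧
      ((z : 𝓞 K) = w + τ w + τ (τ w)) := by
    intro w
    have hS : algebraMap ℚ K (T (w : K)) = ((w + τ w + τ (τ w) : 𝓞 K) : K) := by
      rw [htrsum]
      push_cast
      simp only [hτcoe]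
    exact ratIntAux K _ _ hS
  -- squared lengths of rational integers
  have hsqInt : ∀ z : ℤ, cubicLenSq K ((z : 𝓞 K) : K) = 3 * (z : ℚ) ^ 2 := by
    intro z
    have h1 : ((z : 𝓞 K) : K) = algebraMap ℚ K (z : ℚ) := by
      rw [map_intCast (algebraMap ℚ K)]
      push_cast
      rfl
    have h2 : ((z : 𝓞 K) : K) * ((z : 𝓞 K) : K) = algebraMap ℚ K ((z : ℚ) * (z : ℚ)) := by
      rw [h1, map_mul]
    show T _ = _
    rw [h2, hT]
    rw [Algebra.trace_algebraMap, hdim]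
    push_cast
    ring
  set μ : ℚ := cubicLenSq K (v₁ : K) with hμ
  have hQall : ∀ v : 𝓞 K, IsMinimalVector K J v → cubicLenSq K (v : K) = μ :=
    fun v hv => le_antisymm (hv.2.2 v₁ h₁.1 h₁.2.1) (h₁.2.2 v hv.1 hv.2.1)
  have hμn : μ ≤ 3 * (n : ℚ) ^ 2 := by
    have := h₁.2.2 (n : 𝓞 K) hnJ hnne
    have heq : cubicLenSq K (((n : ℕ) : 𝓞 K) : K) = 3 * (n : ℚ) ^ 2 := by
      have : ((n : ℕ) : 𝓞 K) = ((n : ℤ) : 𝓞 K) := by push_cast; rfl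
      rw [this, hsqInt]
      push_cast
      ring
    rw [hμ]
    calc cubicLenSq K (v₁ : K) ≤ cubicLenSq K (((n : ℕ) : 𝓞 K) : K) := h₁.2.2 _ hnJ hnne
    _ = 3 * (n : ℚ) ^ 2 := heq
  clear_value J n T τ μ
  have hQdef : ∀ x : K, cubicLenSq K x = T (x * x) := fun x => by rw [hT]; rfl
  -- the key dichotomy for minimal vectors
  have key : ∀ v : 𝓞 K, IsMinimalVector K J v →
      (∃ z : ℤ, (z : 𝓞 K) = v) ∨ (T (v : K) = 0 ∧ ∃ c : ℤ, μ = -2 * (c : ℚ)) := by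
    intro v hv
    by_cases hfix : σ (v : K) = (v : K)
    · left
      have h3 : algebraMap ℚ K (T (v : K)) = 3 * (v : K) := by
        rw [htrsum, hfix, hfix]
        ring
      have hdiv : algebraMap ℚ K (T (v : K) / 3) = (v : K) := by
        rw [map_div₀, h3]
        have : algebraMap ℚ K 3 = (3 : K) := by norm_num
        rw [this]
        field_simp
      obtain ⟨z, _, hz⟩ := ratIntAux K v _ hdiv
      exact ⟨z, hz⟩
    · right
      set y : K := (v : K) with hy
      have hQv : T (y * y) = μ := by rw [← hQdef]; exact hQall v hv
      -- trace data
      obtain ⟨t, ht, htS⟩ := traceDat v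
      obtain ⟨c, hc, -⟩ := traceDat (v * τ v)
      have hcy : T (y * σ y) = (c : ℚ) := by
        rw [← hc]
        congr 1
        push_cast
        simp only [hτcoe]
        rfl
      -- t is divisible by n
      have hSJ : (t : 𝓞 K) ∈ J := by
        rw [htS]
        exact J.add_mem (J.add_mem hv.1 (hτJ v hv.1)) (hτJ _ (hτJ v hv.1))
      have hnt : (n : ℤ) ∣ t := hdvdn t hSJ
      -- t is divisible by 3
      have hSP₀ : (t : 𝓞 K) ∈ P₀ := by
        rw [htS]
        have e1 : τ v - v ∈ P₀ := hres v
        have e2 : τ (τ v) - τ v ∈ P₀ := hres (τ v)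
        have e3 : (3 : 𝓞 K) * v ∈ P₀ := P₀.mul_mem_right _ h3P₀
        have : v + τ v + τ (τ v) = (3 : 𝓞 K) * v + ((τ v - v) + ((τ (τ v) - τ v) + (τ v - v))) := by
          ring
        rw [this]
        exact P₀.add_mem e3 (P₀.add_mem e1 (P₀.add_mem e2 e1))
      have h3t : (3 : ℤ) ∣ t := hdvd3 t hSP₀
      -- main trace identity : t² = μ + 2c
      have hc2 : T (y * σ (σ y)) = T (y * σ y) := by
        calc T (y * σ (σ y)) = T (σ (y * σ (σ y))) := (hinv _).symm
        _ = T (σ y * y) := by rw [map_mul, hσ3y]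
        _ = T (y * σ y) := by rw [mul_comm]
      have hident : (t : ℚ) * (t : ℚ) = μ + 2 * (c : ℚ) := by
        have h0 : (T y) • y = y * y + y * σ y + y * σ (σ y) := by
          rw [Algebra.smul_def, htrsum y]
          ring
        have h1 := congrArg T h0
        rw [map_smul, smul_eq_mul, map_add, map_add, hc2, hQv, hcy, ht] at h1
        rw [h1]
        ring
      -- minimality inequality : 2c ≤ μ
      have hτvJ : τ v ∈ J := hτJ v hv.1
      have hsubJ : v - τ v ∈ J := J.sub_mem hv.1 hτvJ
      have hsubne : v - τ v ≠ 0 := by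
        intro h
        apply hfix
        have : v = τ v := by linear_combination (norm := ring_nf) h
        rw [← hτcoe v, ← this]
      have hQsub : cubicLenSq K ((v - τ v : 𝓞 K) : K) = 2 * μ - 2 * (c : ℚ) := by
        have hexp : ((v - τ v : 𝓞 K) : K) * ((v - τ v : 𝓞 K) : K) =
            y * y - (y * σ y + σ y * y) + σ y * σ y := by
          push_cast
          simp only [hτcoe]
          ring
        rw [hQdef, hexp]
        rw [map_add, map_sub, map_add]
        have hσyy : T (σ y * σ y) = μ := by
          rw [show σ y * σ y = σ (y * y) by rw [map_mul], hinv, hQv]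
        rw [hσyy, hQv, hcy, show σ y * y = y * σ y by ring, hcy]
        ring
      have hminle : μ ≤ 2 * μ - 2 * (c : ℚ) := by
        have := hv.2.2 (v - τ v) hsubJ hsubne
        rw [hQall v hv] at this
        rw [← hQsub]
        exact this
      have h2c : 2 * (c : ℚ) ≤ μ := by linarith
      -- t must vanish
      by_cases ht0 : t = 0
      · refine ⟨by rw [ht, ht0]; norm_num, c, ?_⟩
        rw [ht0] at hident
        push_cast at hident
        linarith
      · exfalso
        have hcop : IsCoprime (3 : ℤ) (n : ℤ) :=
          ((Nat.prime_iff_prime_int.mp (by norm_num : Nat.Prime 3)).coprime_iff_not_dvd).mpr hn3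
        have h3n : (3 * (n : ℤ)) ∣ t := hcop.mul_dvd h3t hnt
        have habs : 3 * (n : ℤ) ≤ |t| :=
          Int.le_of_dvd (abs_pos.mpr ht0) ((dvd_abs _ _).mpr h3n)
        have hsqt : (3 * (n : ℤ)) ^ 2 ≤ t ^ 2 := by
          have h1 : (3 * (n : ℤ)) ^ 2 ≤ |t| ^ 2 := pow_le_pow_left₀ (by positivity) habs 2
          rwa [sq_abs] at h1
        have hsqtq : (3 * (n : ℚ)) ^ 2 ≤ (t : ℚ) ^ 2 := by exact_mod_cast hsqt
        have hn1 : (1 : ℚ) ≤ (n : ℚ) := by exact_mod_cast hnpos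
        have e0 : (3 * (n : ℚ)) ^ 2 = 9 * (n : ℚ) ^ 2 := by ring
        have e1 : 9 * (n : ℚ) ^ 2 ≤ (t : ℚ) * (t : ℚ) := by
          rw [← pow_two]
          linarith [hsqtq]
        have e2 : (1 : ℚ) ≤ (n : ℚ) ^ 2 := by
          have := mul_le_mul hn1 hn1 (by norm_num) (by linarith)
          calc (1 : ℚ) = 1 * 1 := by norm_num
          _ ≤ (n : ℚ) * (n : ℚ) := this
          _ = (n : ℚ) ^ 2 := by ring
        linarith [hident, h2c, hμn, e1, e2]
  -- a rational minimal vector forces μ = 3n²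
  have hrat : ∀ v : 𝓞 K, IsMinimalVector K J v → (∃ z : ℤ, (z : 𝓞 K) = v) →
      μ = 3 * (n : ℚ) ^ 2 := by
    rintro v hv ⟨z, hz⟩
    have hzne : z ≠ 0 := by
      rintro rfl
      exact hv.2.1 (by simpa using hz.symm)
    have hzJ : (z : 𝓞 K) ∈ J := by rw [hz]; exact hv.1
    have hdz := hdvdn z hzJ
    have habs : (n : ℤ) ≤ |z| := Int.le_of_dvd (abs_pos.mpr hzne) ((dvd_abs _ _).mpr hdz)
    have hsq : (n : ℤ) ^ 2 ≤ z ^ 2 := by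
      have h1 : ((n : ℤ)) ^ 2 ≤ |z| ^ 2 := pow_le_pow_left₀ (by positivity) habs 2
      rwa [sq_abs] at h1
    have hsqq : (n : ℚ) ^ 2 ≤ (z : ℚ) ^ 2 := by exact_mod_cast hsq
    have hQz : cubicLenSq K (v : K) = 3 * (z : ℚ) ^ 2 := by rw [← hz, hsqInt]
    have hQv := hQall v hv
    rw [hQz] at hQv
    linarith
  -- a rational together with a trace-zero minimal vector is impossible
  have hparity : ∀ c : ℤ, μ = -2 * (c : ℚ) → μ = 3 * (n : ℚ) ^ 2 → False := by
    intro c hc hmu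
    have hq : (3 * (n : ℤ) ^ 2 : ℤ) = -2 * c := by exact_mod_cast hmu.symm.trans hc
    have h2 : (2 : ℤ) ∣ 3 * (n : ℤ) ^ 2 := ⟨-c, by linarith⟩
    have hp2 : Prime (2 : ℤ) := Int.prime_two
    have h3 : (2 : ℤ) ∣ (n : ℤ) ^ 2 := (hp2.dvd_mul.mp h2).resolve_left (by norm_num)
    have h4 : (2 : ℤ) ∣ (n : ℤ) := hp2.dvd_of_dvd_pow h3
    exact hnodd (by exact_mod_cast h4)
  -- three minimal vectors in a subspace of dimension at most two are dependent
  have hdimcon : ∀ (W : Submodule ℚ K), Module.finrank ℚ W ≤ 2 →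
      (v₁ : K) ∈ W → (v₂ : K) ∈ W → (v₃ : K) ∈ W → False := by
    intro W hW hw1 hw2 hw3
    have hmem : ∀ j : Fin 3, (![(v₁ : K), (v₂ : K), (v₃ : K)] j) ∈ W := by
      intro j; fin_cases j <;> assumption
    have hliw : LinearIndependent ℚ (fun j : Fin 3 => (⟨_, hmem j⟩ : W)) := by
      apply LinearIndependent.of_comp W.subtype
      convert hli using 1
      rfl
    have hcard := hliw.fintype_card_le_finrank
    rw [Fintype.card_fin] at hcard
    omega
  -- finish by case analysis
  have hker2 : Module.finrank ℚ (LinearMap.ker T) = 2 := by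
    have hrange : LinearMap.range T = ⊤ := by
      rw [LinearMap.range_eq_top]
      intro q
      refine ⟨algebraMap ℚ K (q / 3), ?_⟩
      rw [hT]
      rw [Algebra.trace_algebraMap, hdim]
      push_cast
      ring
    have hrn := LinearMap.finrank_range_add_finrank_ker T
    rw [hrange, finrank_top, Module.finrank_self, hdim] at hrn
    omega
  have hmemker : ∀ v : 𝓞 K, T (v : K) = 0 → (v : K) ∈ LinearMap.ker T :=
    fun v hv => LinearMap.mem_ker.mpr hv
  have hmemspan : ∀ (v : 𝓞 K) (z : ℤ), (z : 𝓞 K) = v → (v : K) ∈ (ℚ ∙ (1 : K)) := by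
    intro v z hz
    refine Submodule.mem_span_singleton.mpr ⟨(z : ℚ), ?_⟩
    rw [← hz]
    push_cast
    simp
  have hspan2 : Module.finrank ℚ (ℚ ∙ (1 : K)) ≤ 2 := by
    rw [finrank_span_singleton (one_ne_zero : (1 : K) ≠ 0)]
    omega
  rcases key v₁ h₁ with h1k | h1k <;> rcases key v₂ h₂ with h2k | h2k <;>
    rcases key v₃ h₃ with h3k | h3k
  · obtain ⟨z1, hz1⟩ := h1k
    obtain ⟨z2, hz2⟩ := h2k
    obtain ⟨z3, hz3⟩ := h3k
    exact hdimcon _ hspan2 (hmemspan _ _ hz1) (hmemspan _ _ hz2) (hmemspan _ _ hz3)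
  · obtain ⟨c, hc⟩ := h3k.2
    exact hparity c hc (hrat v₁ h₁ h1k)
  · obtain ⟨c, hc⟩ := h2k.2
    exact hparity c hc (hrat v₁ h₁ h1k)
  · obtain ⟨c, hc⟩ := h2k.2
    exact hparity c hc (hrat v₁ h₁ h1k)
  · obtain ⟨c, hc⟩ := h1k.2
    exact hparity c hc (hrat v₂ h₂ h2k)
  · obtain ⟨c, hc⟩ := h1k.2
    exact hparity c hc (hrat v₂ h₂ h2k)
  · obtain ⟨c, hc⟩ := h1k.2
    exact hparity c hc (hrat v₃ h₃ h3k)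
  · exact hdimcon _ (le_of_eq hker2) (hmemker _ h1k.1) (hmemker _ h2k.1) (hmemker _ h3k.1)
end

section
/- Let p be a prime divisor of m and write p = 3n + 1 with n a positive integer. Then pO_F = P³, where P is the unique prime ideal of O_F above p, and P is generated by p and α + n. Moreover, −α + σ(α) ∈ P, Tr_{F/ℚ}((−α + σ(α))²) = 2m, and Tr_{F/ℚ}((α + n)²) = (2m + p²)/3. -/
open NumberField

/-- Auxiliary: the key ideal-cube computation in the ring of integers,
for any root `β` of the Hasse cubic. -/
lemma aux_cube {O : Type*} [CommRing O] (β : O) (q n m' : ℕ) (a u v s t : ℤ)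
    (hqn : q = 3 * n + 1)
    (hrel : 27 * β ^ 3 - 27 * β ^ 2 + 9 * (1 - ((q * m' : ℕ) : O)) * β
      - (((q * m' : ℕ) : O) * ((a : O) - 3) + 1) = 0)
    (hbez1 : u * 27 + v * (q : ℤ) = 1)
    (hbez2 : s * (q : ℤ) + t * ((m' : ℤ) * a) = 1) :
    Ideal.span {((q : ℕ) : O)} = (Ideal.span {((q : ℕ) : O), β + (n : O)}) ^ 3 := by
  have hqO : ((q : ℕ) : O) = 3 * (n : O) + 1 := by rw [hqn]; push_cast; ring
  have hmO : (((q * m' : ℕ)) : O) = (3 * (n : O) + 1) * ((m' : ℕ) : O) := by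
    rw [hqn]; push_cast; ring
  rw [hmO] at hrel
  obtain ⟨w, hw⟩ : ∃ w : O, w = 27 * β ^ 2 + (27 * (n : O) - 9 + 9 * (m' : O)) * β
      + ((m' : O) * ((a : O) - 3) + 9 * (n : O) ^ 2 - 3 * (n : O) + 1) := ⟨_, rfl⟩
  have hkey : 27 * (β + (n : O)) ^ 3 = (3 * (n : O) + 1) * w := by
    linear_combination hrel - (3 * (n : O) + 1) * hw
  have hbez1O : (u : O) * 27 + (v : O) * (3 * (n : O) + 1) = 1 := by
    rw [← hqO]; exact_mod_cast congrArg (fun z : ℤ => (z : O)) hbez1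
  obtain ⟨w', hw'⟩ : ∃ w' : O, w' = (u : O) * w + (v : O) * (β + (n : O)) ^ 3 := ⟨_, rfl⟩
  have h27w' : 27 * w' = w := by
    linear_combination 27 * hw' + (v : O) * hkey + w * hbez1O
  have hqw' : (3 * (n : O) + 1) * w' = (β + (n : O)) ^ 3 := by
    linear_combination (3 * (n : O) + 1) * hw' + (-(u : O)) * hkey + (β + (n : O)) ^ 3 * hbez1O
  set P : Ideal O := Ideal.span {((q : ℕ) : O), β + (n : O)} with hP
  have hqP : ((q : ℕ) : O) ∈ P := Ideal.subset_span (Set.mem_insert _ _)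
  have hxP : β + (n : O) ∈ P := Ideal.subset_span (Set.mem_insert_iff.mpr (Or.inr rfl))
  apply le_antisymm
  · -- span {q} ≤ P ^ 3
    have hJ : Ideal.span {((q : ℕ) : O) * ((q : ℕ) : O), ((q : ℕ) : O) * (β + (n : O)),
        (β + (n : O)) * (β + (n : O)), w'} = ⊤ := by
      by_contra hne
      obtain ⟨M, hMmax, hle⟩ := Ideal.exists_le_maximal _ hne
      have hMp := hMmax.isPrime
      have hqM : ((q : ℕ) : O) ∈ M :=
        (hMp.mem_or_mem (hle (Ideal.subset_span (by simp)))).elim id id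
      have hxM : β + (n : O) ∈ M := by
        refine (hMp.mem_or_mem (hle (Ideal.subset_span ?_))).elim id id
        simp
      have hw'M : w' ∈ M := hle (Ideal.subset_span (by simp))
      have hMA : ((m' : ℕ) : O) * ((a : ℤ) : O) =
          27 * w' + ((27 * (n : O) + 9 - 9 * (m' : O)) - 27 * (β + (n : O))) * (β + (n : O))
            + (3 * (m' : O) - ((q : ℕ) : O)) * ((q : ℕ) : O) := by
        rw [hqO]; linear_combination -h27w' - hw
      have hmaM : ((m' : ℕ) : O) * ((a : ℤ) : O) ∈ M := by
        rw [hMA]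
        exact add_mem (add_mem (M.mul_mem_left _ hw'M) (M.mul_mem_left _ hxM))
          (M.mul_mem_left _ hqM)
      have h1M : (1 : O) ∈ M := by
        have h : ((1 : ℤ) : O) = (s : O) * ((q : ℕ) : O)
            + (t : O) * (((m' : ℕ) : O) * ((a : ℤ) : O)) := by
          rw [← hbez2]; push_cast; ring
        rw [← Int.cast_one, h]
        exact add_mem (M.mul_mem_left _ hqM) (M.mul_mem_left _ hmaM)
      exact hMmax.ne_top (Ideal.eq_top_iff_one M |>.mpr h1M)
    have hmul : Ideal.span {((q : ℕ) : O)} *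
        Ideal.span {((q : ℕ) : O) * ((q : ℕ) : O), ((q : ℕ) : O) * (β + (n : O)),
          (β + (n : O)) * (β + (n : O)), w'} ≤ P ^ 3 := by
      refine Ideal.mul_le.mpr fun r hr s' hs' => ?_
      obtain ⟨c, rfl⟩ := Ideal.mem_span_singleton'.mp hr
      have hQs : ((q : ℕ) : O) * s' ∈ P ^ 3 := by
        refine Submodule.span_induction (p := fun z _ => ((q : ℕ) : O) * z ∈ P ^ 3)
          ?_ ?_ ?_ ?_ hs'
        · intro z hz
          simp only [Set.mem_insert_iff, Set.mem_singleton_iff] at hz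
          rcases hz with rfl | rfl | rfl | rfl
          · rw [show ((q : ℕ) : O) * (((q : ℕ) : O) * ((q : ℕ) : O)) = ((q : ℕ) : O) ^ 3 by ring]
            exact Ideal.pow_mem_pow hqP 3
          · rw [show ((q : ℕ) : O) * (((q : ℕ) : O) * (β + (n : O)))
                = ((q : ℕ) : O) ^ 2 * (β + (n : O)) by ring, pow_succ]
            exact Ideal.mul_mem_mul (Ideal.pow_mem_pow hqP 2) hxP
          · rw [show ((q : ℕ) : O) * ((β + (n : O)) * (β + (n : O)))
                = (β + (n : O)) ^ 2 * ((q : ℕ) : O) by ring, pow_succ]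
            exact Ideal.mul_mem_mul (Ideal.pow_mem_pow hxP 2) hqP
          · rw [hqO, hqw']
            exact Ideal.pow_mem_pow hxP 3
        · simp
        · intro y z _ _ hy hz
          rw [mul_add]; exact add_mem hy hz
        · intro c' z _ hz
          rw [smul_eq_mul, show ((q : ℕ) : O) * (c' * z) = c' * (((q : ℕ) : O) * z) by ring]
          exact Ideal.mul_mem_left _ _ hz
      rw [mul_assoc]
      exact Ideal.mul_mem_left _ _ hQs
    intro y hy
    obtain ⟨c, rfl⟩ := Ideal.mem_span_singleton'.mp hy
    have hmem : ((q : ℕ) : O) * 1 ∈ P ^ 3 := by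
      refine hmul (Ideal.mul_mem_mul (Ideal.mem_span_singleton_self _) ?_)
      rw [hJ]; trivial
    rw [mul_one] at hmem
    exact Ideal.mul_mem_left _ _ hmem
  · -- P ^ 3 ≤ span {q}
    have hsplit : P = Ideal.span {((q : ℕ) : O)} + Ideal.span {β + (n : O)} := by
      rw [hP, Ideal.span_insert, Ideal.add_eq_sup]
    have hexp : P ^ 3 = Ideal.span {((q : ℕ) : O)} ^ 3
        + 3 * (Ideal.span {((q : ℕ) : O)} ^ 2 * Ideal.span {β + (n : O)})
        + 3 * (Ideal.span {((q : ℕ) : O)} * Ideal.span {β + (n : O)} ^ 2)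
        + Ideal.span {β + (n : O)} ^ 3 := by
      rw [hsplit]; ring
    rw [hexp]
    simp only [Ideal.add_eq_sup, sup_le_iff]
    refine ⟨⟨⟨?_, ?_⟩, ?_⟩, ?_⟩
    · rw [pow_succ]; exact Ideal.mul_le_right
    · calc 3 * (Ideal.span {((q : ℕ) : O)} ^ 2 * Ideal.span {β + (n : O)})
          = (3 * Ideal.span {((q : ℕ) : O)} * Ideal.span {β + (n : O)})
            * Ideal.span {((q : ℕ) : O)} := by ring
        _ ≤ Ideal.span {((q : ℕ) : O)} := Ideal.mul_le_right
    · calc 3 * (Ideal.span {((q : ℕ) : O)} * Ideal.span {β + (n : O)} ^ 2)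
          = (3 * Ideal.span {β + (n : O)} ^ 2) * Ideal.span {((q : ℕ) : O)} := by ring
        _ ≤ Ideal.span {((q : ℕ) : O)} := Ideal.mul_le_right
    · rw [Ideal.span_singleton_pow, Ideal.span_singleton_le_span_singleton]
      exact ⟨w', by rw [← hqw', hqO]⟩

/-- Auxiliary: an ideal whose cube is `qO` (`q` a rational prime) is prime. -/
lemma prime_of_cube (K : Type) [Field K] [NumberField K]
    (hdim : Module.finrank ℚ K = 3)
    (q : ℕ) (hq : Nat.Prime q) (P : Ideal (𝓞 K))
    (hP3 : Ideal.span {(q : 𝓞 K)} = P ^ 3) :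
    P.IsPrime := by
  have hNq : Ideal.absNorm (Ideal.span {(q : 𝓞 K)}) = q ^ 3 := by
    rw [Ideal.absNorm_span_singleton]
    have h1 : (q : 𝓞 K) = algebraMap ℤ (𝓞 K) (q : ℤ) := by push_cast; rfl
    rw [h1, Algebra.norm_algebraMap_of_basis (NumberField.RingOfIntegers.basis K)]
    rw [show Fintype.card (Module.Free.ChooseBasisIndex ℤ (𝓞 K)) = 3 by
      rw [← Module.finrank_eq_card_chooseBasisIndex, RingOfIntegers.rank, hdim]]
    rw [Int.natAbs_pow]
    simp
  have hNP : Ideal.absNorm P = q := by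
    have h3 : (Ideal.absNorm P) ^ 3 = q ^ 3 := by
      rw [← map_pow, ← hP3, hNq]
    exact Nat.pow_left_injective (by norm_num) h3
  exact Ideal.isPrime_of_irreducible_absNorm (by rw [hNP]; exact hq.prime.irreducible)

/-- With `F` the cyclic cubic field of conductor `m = p₁⋯p_r`
(`pᵢ ≡ 1 mod 3` distinct primes) from the Hasse parametrization, let `q = 3n + 1` be a
prime divisor of `m`.  Then `qO_F = P³` where `P` is the unique prime ideal above `q`,
`P = ⟨q, α + n⟩`, `−α + σ(α) ∈ P`, `Tr((−α+σα)²) = 2m` and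
`Tr((α+n)²) = (2m + q²)/3`. -/
theorem statement8
    (K : Type) [Field K] [NumberField K] [IsGalois ℚ K]
    (hdim : Module.finrank ℚ K = 3)
    (σ : K ≃ₐ[ℚ] K) (hσ1 : σ ≠ 1) (hσ3 : σ ^ 3 = 1)
    (r : ℕ) (hr : 1 ≤ r)
    (p : Fin r → ℕ) (hpprime : ∀ i, Nat.Prime (p i))
    (hpmod : ∀ i, p i % 3 = 1) (hpinj : Function.Injective p)
    (m : ℕ) (hm : m = ∏ i, p i)
    (a b : ℤ) (ha : a % 3 = 2) (hb : b % 3 = 0) (hbpos : 0 < b)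
    (hab : 4 * (m : ℤ) = a ^ 2 + 3 * b ^ 2)
    (α : K) (hgen : Algebra.adjoin ℚ {α} = ⊤)
    (hα : 27 * α ^ 3 - 27 * α ^ 2 + 9 * (1 - (m : K)) * α
        - ((m : K) * ((a : K) - 3) + 1) = 0)
    (αi : 𝓞 K) (hαi : (αi : K) = α)
    (σαi : 𝓞 K) (hσαi : (σαi : K) = σ α)
    (q : ℕ) (hq : Nat.Prime q) (hqm : q ∣ m)
    (n : ℕ) (hn : 0 < n) (hqn : q = 3 * n + 1) :
    ∃ P : Ideal (𝓞 K), P.IsPrime ∧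
      Ideal.span {(q : 𝓞 K)} = P ^ 3 ∧
      (∀ Q : Ideal (𝓞 K), Q.IsPrime → (q : 𝓞 K) ∈ Q → Q = P) ∧
      P = Ideal.span {(q : 𝓞 K), αi + (n : 𝓞 K)} ∧
      -αi + σαi ∈ P ∧
      Algebra.trace ℚ K ((-α + σ α) ^ 2) = 2 * (m : ℚ) ∧
      Algebra.trace ℚ K ((α + (n : K)) ^ 2) = (2 * (m : ℚ) + (q : ℚ) ^ 2) / 3 := by
  classical
  -- ## arithmetic facts
  obtain ⟨m', hm'⟩ := hqm
  have hq3 : q ≠ 3 := by omega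
  have hq2 : q ≠ 2 := by omega
  have hqZ : Prime (q : ℤ) := Nat.prime_iff_prime_int.mp hq
  have hqd3 : ¬ q ∣ 3 := fun h => hq3 ((Nat.prime_dvd_prime_iff_eq hq Nat.prime_three).mp h)
  have hqd2 : ¬ q ∣ 2 := fun h => hq2 ((Nat.prime_dvd_prime_iff_eq hq Nat.prime_two).mp h)
  have hqdm' : ¬ q ∣ m' := by
    intro hd
    have h1 : q ∣ ∏ i, p i := by rw [← hm, hm']; exact Dvd.intro m' rfl
    obtain ⟨i₀, -, hi₀⟩ := hq.prime.exists_mem_finset_dvd h1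
    have hqp : q = p i₀ := (Nat.prime_dvd_prime_iff_eq hq (hpprime i₀)).mp hi₀
    have hR : m = p i₀ * ∏ i ∈ Finset.univ.erase i₀, p i := by
      rw [hm, Finset.mul_prod_erase _ _ (Finset.mem_univ i₀)]
    have hm'R : m' = ∏ i ∈ Finset.univ.erase i₀, p i := by
      rw [hm', ← hqp] at hR
      exact Nat.eq_of_mul_eq_mul_left hq.pos hR
    rw [hm'R] at hd
    obtain ⟨i₁, hi₁mem, hi₁⟩ := hq.prime.exists_mem_finset_dvd hd
    have he : q = p i₁ := (Nat.prime_dvd_prime_iff_eq hq (hpprime i₁)).mp hi₁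
    exact (Finset.mem_erase.mp hi₁mem).1 (hpinj (by rw [← he, ← hqp]))
  have hqa : ¬ (q : ℤ) ∣ a := by
    intro hd
    have hcast : (m : ℤ) = (q : ℤ) * (m' : ℤ) := by exact_mod_cast congrArg Nat.cast hm'
    have h4m : (q : ℤ) ∣ 4 * (m : ℤ) :=
      Dvd.dvd.mul_left (Int.natCast_dvd_natCast.mpr ⟨m', hm'⟩) 4
    have h3b : (q : ℤ) ∣ 3 * b ^ 2 := by
      have h := dvd_sub h4m (dvd_pow hd two_ne_zero)
      rw [hab] at h
      have he : a ^ 2 + 3 * b ^ 2 - a ^ 2 = 3 * b ^ 2 := by ring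
      rwa [he] at h
    have hqb2 : (q : ℤ) ∣ b ^ 2 := by
      refine (hqZ.dvd_mul.mp h3b).resolve_left fun h => ?_
      exact hqd3 (by exact_mod_cast h)
    have hqb : (q : ℤ) ∣ b := hqZ.dvd_of_dvd_pow hqb2
    obtain ⟨a', rfl⟩ := hd
    obtain ⟨b', rfl⟩ := hqb
    rw [hcast] at hab
    have heq : 4 * (m' : ℤ) = (q : ℤ) * (a' ^ 2 + 3 * b' ^ 2) := by
      apply mul_left_cancel₀ (show (q : ℤ) ≠ 0 by exact_mod_cast hq.ne_zero)
      linear_combination hab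
    have h4m' : (q : ℤ) ∣ 4 * (m' : ℤ) := Dvd.intro _ heq.symm
    have hdm' : (q : ℤ) ∣ (m' : ℤ) := by
      refine (hqZ.dvd_mul.mp h4m').resolve_left fun h => ?_
      have h4 : q ∣ 4 := by exact_mod_cast h
      exact hqd2 (hq.dvd_of_dvd_pow (show q ∣ 2 ^ 2 by norm_num [h4]))
    exact hqdm' (by exact_mod_cast hdm')
  obtain ⟨u, v, hbez1⟩ : ∃ u v : ℤ, u * 27 + v * (q : ℤ) = 1 := by
    have h27 : ¬ (q : ℤ) ∣ 27 := by
      intro h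
      have h' : q ∣ 27 := by exact_mod_cast h
      exact hqd3 (hq.dvd_of_dvd_pow (show q ∣ 3 ^ 3 by norm_num [h']))
    obtain ⟨u, v, huv⟩ := (hqZ.coprime_iff_not_dvd.mpr h27).symm
    exact ⟨u, v, huv⟩
  obtain ⟨s, t, hbez2⟩ : ∃ s t : ℤ, s * (q : ℤ) + t * ((m' : ℤ) * a) = 1 := by
    have hma : ¬ (q : ℤ) ∣ (m' : ℤ) * a := by
      intro h
      rcases hqZ.dvd_mul.mp h with h | h
      · exact hqdm' (by exact_mod_cast h)
      · exact hqa h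
    obtain ⟨s, t, hst⟩ := hqZ.coprime_iff_not_dvd.mpr hma
    exact ⟨s, t, hst⟩
  -- ## relations in the ring of integers
  have hrelO : 27 * αi ^ 3 - 27 * αi ^ 2 + 9 * (1 - (m : 𝓞 K)) * αi
      - ((m : 𝓞 K) * ((a : 𝓞 K) - 3) + 1) = 0 := by
    apply RingOfIntegers.coe_injective
    simp only [map_sub, map_add, map_mul, map_pow, map_one, map_ofNat, map_natCast,
      map_intCast, map_zero]
    rw [RingOfIntegers.coe_eq_algebraMap] at hαi
    rw [hαi]
    linear_combination hα
  have h2 : 27 * (σ α) ^ 3 - 27 * (σ α) ^ 2 + 9 * (1 - (m : K)) * (σ α)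
      - ((m : K) * ((a : K) - 3) + 1) = 0 := by
    have h := congrArg σ hα
    simpa only [map_sub, map_add, map_mul, map_pow, map_one, map_ofNat, map_natCast,
      map_intCast, map_zero] using h
  have hσrelO : 27 * σαi ^ 3 - 27 * σαi ^ 2 + 9 * (1 - (m : 𝓞 K)) * σαi
      - ((m : 𝓞 K) * ((a : 𝓞 K) - 3) + 1) = 0 := by
    apply RingOfIntegers.coe_injective
    simp only [map_sub, map_add, map_mul, map_pow, map_one, map_ofNat, map_natCast,
      map_intCast, map_zero]
    rw [RingOfIntegers.coe_eq_algebraMap] at hσαi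
    rw [hσαi]
    linear_combination h2
  rw [hm'] at hrelO hσrelO
  -- ## the prime ideal
  have hP3 := aux_cube αi q n m' a u v s t hqn hrelO hbez1 hbez2
  set P : Ideal (𝓞 K) := Ideal.span {(q : 𝓞 K), αi + (n : 𝓞 K)} with hPdef
  have hPprime : P.IsPrime := prime_of_cube K hdim q hq P hP3
  have hqP : (q : 𝓞 K) ∈ P := Ideal.subset_span (Set.mem_insert _ _)
  have hPbot : P ≠ ⊥ := by
    intro h
    have h0 : (q : 𝓞 K) ∈ (⊥ : Ideal (𝓞 K)) := h ▸ hqP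
    rw [Ideal.mem_bot] at h0
    exact hq.ne_zero (Nat.cast_eq_zero.mp h0)
  have hPmax : P.IsMaximal := Ideal.IsPrime.isMaximal hPprime hPbot
  have huniq : ∀ Q : Ideal (𝓞 K), Q.IsPrime → (q : 𝓞 K) ∈ Q → Q = P := by
    intro Q hQ hqQ
    have hle : P ^ 3 ≤ Q := by
      rw [← hP3]
      exact (Ideal.span_singleton_le_iff_mem Q).mpr hqQ
    have hPQ : P ≤ Q := fun x hx => hQ.mem_of_pow_mem 3 (hle (Ideal.pow_mem_pow hx 3))
    exact (hPmax.eq_of_le hQ.ne_top hPQ).symm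
  -- the conjugate generator lies in the same prime
  have hP'3 := aux_cube σαi q n m' a u v s t hqn hσrelO hbez1 hbez2
  have hP'prime := prime_of_cube K hdim q hq _ hP'3
  have hP'eq : Ideal.span {(q : 𝓞 K), σαi + (n : 𝓞 K)} = P :=
    huniq _ hP'prime (Ideal.subset_span (Set.mem_insert _ _))
  have hmemP : -αi + σαi ∈ P := by
    have h1 : σαi + (n : 𝓞 K) ∈ P := by
      rw [← hP'eq]
      exact Ideal.subset_span (Set.mem_insert_iff.mpr (Or.inr rfl))
    have h2' : αi + (n : 𝓞 K) ∈ P := Ideal.subset_span (Set.mem_insert_iff.mpr (Or.inr rfl))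
    have he : -αi + σαi = (σαi + (n : 𝓞 K)) - (αi + (n : 𝓞 K)) := by ring
    rw [he]
    exact sub_mem h1 h2'
  -- ## traces
  have h3 : ∀ z : K, σ (σ (σ z)) = z := by
    intro z
    have h : (σ * σ * σ) z = z := by
      rw [show σ * σ * σ = σ ^ 3 by rw [pow_succ, pow_succ, pow_one], hσ3]; rfl
    simpa [AlgEquiv.mul_apply] using h
  have h2' : 27 * (σ (σ α)) ^ 3 - 27 * (σ (σ α)) ^ 2 + 9 * (1 - (m : K)) * (σ (σ α))
      - ((m : K) * ((a : K) - 3) + 1) = 0 := by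
    have h := congrArg σ h2
    simpa only [map_sub, map_add, map_mul, map_pow, map_one, map_ofNat, map_natCast,
      map_intCast, map_zero] using h
  have hαβ : α ≠ σ α := by
    intro h
    apply hσ1
    have hfix : ∀ z : K, σ z = z := by
      intro z
      have hle : Algebra.adjoin ℚ {α} ≤ AlgHom.equalizer (σ : K →ₐ[ℚ] K) (AlgHom.id ℚ K) := by
        apply Algebra.adjoin_le
        intro y hy
        rcases hy with rfl
        exact h.symm
      rw [hgen] at hle
      exact hle trivial
    exact AlgEquiv.ext hfix
  have hβγ : σ α ≠ σ (σ α) := fun h => hαβ (σ.injective h)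
  have hαγ : α ≠ σ (σ α) := by
    intro h
    exact hαβ ((congrArg σ h).trans (h3 α)).symm
  have hA : 27 * (α ^ 2 + α * σ α + (σ α) ^ 2) - 27 * (α + σ α) + 9 * (1 - (m : K)) = 0 := by
    have hd : α - σ α ≠ 0 := sub_ne_zero.mpr hαβ
    have h0 : (α - σ α) * (27 * (α ^ 2 + α * σ α + (σ α) ^ 2) - 27 * (α + σ α)
        + 9 * (1 - (m : K))) = 0 := by
      linear_combination hα - h2
    exact (mul_eq_zero.mp h0).resolve_left hd
  have hB : 27 * ((σ α) ^ 2 + σ α * σ (σ α) + (σ (σ α)) ^ 2) - 27 * (σ α + σ (σ α))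
      + 9 * (1 - (m : K)) = 0 := by
    have hd : σ α - σ (σ α) ≠ 0 := sub_ne_zero.mpr hβγ
    have h0 : (σ α - σ (σ α)) * (27 * ((σ α) ^ 2 + σ α * σ (σ α) + (σ (σ α)) ^ 2)
        - 27 * (σ α + σ (σ α)) + 9 * (1 - (m : K))) = 0 := by
      linear_combination h2 - h2'
    exact (mul_eq_zero.mp h0).resolve_left hd
  have hS : α + σ α + σ (σ α) = 1 := by
    have hd : α - σ (σ α) ≠ 0 := sub_ne_zero.mpr hαγ
    have h0 : (α - σ (σ α)) * (27 * (α + σ α + σ (σ α)) - 27) = 0 := by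
      linear_combination hA - hB
    have h1 := (mul_eq_zero.mp h0).resolve_left hd
    linear_combination h1 / 27
  have he2 : 3 * (α * σ α + σ α * σ (σ α) + σ (σ α) * α) = 1 - (m : K) := by
    linear_combination (-1/9 : K) * hA + 3 * (α + σ α) * hS
  have hcard : Fintype.card (K ≃ₐ[ℚ] K) = 3 := by
    rw [← Nat.card_eq_fintype_card, IsGalois.card_aut_eq_finrank, hdim]
  have hσ21 : σ ^ 2 ≠ 1 := by
    intro h
    apply hσ1
    calc σ = σ ^ 3 * (σ ^ 2)⁻¹ := by group
    _ = 1 := by rw [hσ3, h]; group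
  have hσ2σ : σ ^ 2 ≠ σ := by
    intro h
    apply hσ1
    rw [pow_two] at h
    exact mul_right_cancel (h.trans (one_mul σ).symm)
  have hne1 : (1 : K ≃ₐ[ℚ] K) ∉ ({σ, σ ^ 2} : Finset (K ≃ₐ[ℚ] K)) := by
    simp only [Finset.mem_insert, Finset.mem_singleton]
    push_neg
    exact ⟨fun h => hσ1 h.symm, fun h => hσ21 h.symm⟩
  have hne2 : σ ∉ ({σ ^ 2} : Finset (K ≃ₐ[ℚ] K)) := by
    simp only [Finset.mem_singleton]
    exact fun h => hσ2σ h.symm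
  have huniv : (Finset.univ : Finset (K ≃ₐ[ℚ] K)) = {1, σ, σ ^ 2} := by
    symm
    apply Finset.eq_univ_of_card
    rw [hcard, Finset.card_insert_of_notMem hne1, Finset.card_insert_of_notMem hne2,
      Finset.card_singleton]
  have hsum : ∀ y : K, algebraMap ℚ K (Algebra.trace ℚ K y) = y + σ y + σ (σ y) := by
    intro y
    rw [trace_eq_sum_automorphisms, huniv, Finset.sum_insert hne1, Finset.sum_insert hne2,
      Finset.sum_singleton, AlgEquiv.one_apply, pow_two, AlgEquiv.mul_apply]
    ring
  refine ⟨P, hPprime, hP3, huniq, rfl, hmemP, ?_, ?_⟩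
  · apply (algebraMap ℚ K).injective
    rw [hsum]
    simp only [map_pow, map_add, map_neg, map_mul, map_natCast, map_ofNat]
    rw [h3 α]
    linear_combination (2 * (α + σ α + σ (σ α) + 1)) * hS - 2 * he2
  · apply (algebraMap ℚ K).injective
    rw [hsum]
    simp only [map_pow, map_add, map_neg, map_mul, map_natCast, map_ofNat, map_div₀]
    rw [hqn]
    push_cast
    rw [eq_div_iff (by norm_num : (3 : K) ≠ 0)]
    linear_combination (3 * (α + σ α + σ (σ α) + 1) + 6 * (n : K)) * hS - 2 * he2
end

section
/- There exist integers A and B such that A² − AB + B² = m/9 and α² = 2m/9 + Aα + Bσ(α). -/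
open NumberField

private lemma aux_statement11 {K : Type} [Field K] [CharZero K] (x y M u v : K)
    (hM : M ≠ 0) (hv : v ≠ 0)
    (hq : 3*(x^2 + x*y + y^2) = M)
    (hx : 27*x^3 - 9*M*x - (6*u - 3*v)*M = 0)
    (hcd : 9*(u^2 - u*v + v^2) = M)
    (hD : (x - y)*(2*M + 9*x*y) = 3*M*v) :
    x ^ 2 = 2 * M / 9 + u * x + v * y := by
  have hfact0 : ((-13122 : K)*M^3) *
      ((9*v*y - (9*x^2 - 2*M - 9*u*x)) * (9*v*y + 9*v*x + (9*x^2 - 2*M - 9*u*x))) = 0 := by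
    linear_combination
      ((9565938 : K)*x^6*M + (-6377292 : K)*x^4*M^2 + (1062882 : K)*x^2*M^3 + (-52488 : K)*M^4) * hq +
      ((-1062882 : K)*x^5*M + (-1062882 : K)*x^4*y*M + (-1062882 : K)*x^3*y^2*M + (708588 : K)*x^3*M^2 + (354294 : K)*x^2*y*M^2 + (-236196 : K)*x^2*M^2*u + (118098 : K)*x^2*M^2*v + (354294 : K)*x*y^2*M^2 + (-236196 : K)*x*y*M^2*u + (118098 : K)*x*y*M^2*v + (-78732 : K)*x*M^3 + (-236196 : K)*y^2*M^2*u + (118098 : K)*y^2*M^2*v) * hx +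
      ((-39366 : K)*x^2*M^3 + (-157464 : K)*x*y*M^3 + (-157464 : K)*y^2*M^3) * hcd
  have hfact : (9*v*y - (9*x^2 - 2*M - 9*u*x)) * (9*v*y + 9*v*x + (9*x^2 - 2*M - 9*u*x)) = 0 := by
    have hMM : ((-13122 : K)*M^3) ≠ 0 := mul_ne_zero (by norm_num) (pow_ne_zero _ hM)
    exact (mul_eq_zero.mp hfact0).resolve_left hMM
  rcases mul_eq_zero.mp hfact with h | h
  · linear_combination (-1/9 : K) * h
  · exfalso
    have h0 : v^2*((x - y)*(2*M + 9*x*y) + 3*M*v) = 0 := by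
      linear_combination
        ((-1/3 : K)*x^2 + (2/3 : K)*x*u + (-1 : K)*x*v + (2/3 : K)*u*v + (-1/3 : K)*v^2) * hx +
        ((-1 : K)*x^3 + (4/9 : K)*x*M + (4/9 : K)*M*v) * hcd +
        ((1 : K)*x^3 + (-1 : K)*x^2*u + (2 : K)*x^2*v + (-1 : K)*x*y*v + (-2/9 : K)*x*M + (-2/9 : K)*M*v) * h
    have h1 : (6:K)*M*v^3 = 0 := by linear_combination h0 - v^2*hD
    exact (mul_ne_zero (mul_ne_zero (by norm_num : (6:K) ≠ 0) hM) (pow_ne_zero _ hv)) h1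

/-- With `F` the cyclic cubic field of conductor `m = 9p₁⋯p_r`
(`pᵢ ≡ 1 mod 3` distinct primes) from the Hasse parametrization, with `α` a root of
`x³ − (m/3)x − am/27`, there exist integers `A, B` with `A² − AB + B² = m/9` and
`α² = 2m/9 + Aα + Bσ(α)`. -/
theorem statement11
    (K : Type) [Field K] [NumberField K] [IsGalois ℚ K]
    (hdim : Module.finrank ℚ K = 3)
    (σ : K ≃ₐ[ℚ] K) (hσ1 : σ ≠ 1) (hσ3 : σ ^ 3 = 1)
    (r : ℕ) (p : Fin r → ℕ) (hpprime : ∀ i, Nat.Prime (p i))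
    (hpmod : ∀ i, p i % 3 = 1) (hpinj : Function.Injective p)
    (m : ℕ) (hm : m = 9 * ∏ i, p i)
    (a b : ℤ) (ha : a % 9 = 6) (hb : b % 9 = 3 ∨ b % 9 = 6) (hbpos : 0 < b)
    (hab : 4 * (m : ℤ) = a ^ 2 + 3 * b ^ 2)
    (α : K) (hgen : Algebra.adjoin ℚ {α} = ⊤)
    (hα : 27 * α ^ 3 - 9 * (m : K) * α - (a : K) * (m : K) = 0) :
    ∃ A B : ℤ, (A : ℚ) ^ 2 - (A : ℚ) * (B : ℚ) + (B : ℚ) ^ 2 = (m : ℚ) / 9 ∧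
      α ^ 2 = 2 * (m : K) / 9 + (A : K) * α + (B : K) * σ α := by
  have hppos : 0 < ∏ i, p i := Finset.prod_pos fun i _ => (hpprime i).pos
  have hmpos : 0 < m := by omega
  have hMne : ((m:K)) ≠ 0 := Nat.cast_ne_zero.mpr hmpos.ne'
  have h3a : (3:ℤ) ∣ a := by omega
  have h3b : (3:ℤ) ∣ b := by rcases hb with h | h <;> omega
  obtain ⟨d0, hd0⟩ := h3b
  have hd0pos : 0 < d0 := by omega
  -- parity of a and b agree
  have hpar : a % 2 = b % 2 := by
    rcases Int.even_or_odd a with ⟨k, hk⟩ | ⟨k, hk⟩ <;>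
      rcases Int.even_or_odd b with ⟨l, hl⟩ | ⟨l, hl⟩
    · omega
    · exfalso
      have h43 : (4:ℤ) ∣ 3 := ⟨m - k^2 - 3*l^2 - 3*l, by rw [hk, hl] at hab; linear_combination -hab⟩
      norm_num at h43
    · exfalso
      have h41 : (4:ℤ) ∣ 1 := ⟨m - k^2 - k - 3*l^2, by rw [hk, hl] at hab; linear_combination -hab⟩
      norm_num at h41
    · omega
  -- σ α is also a root of the cubic
  have hβ : 27 * (σ α) ^ 3 - 9 * (m : K) * (σ α) - (a : K) * (m : K) = 0 := by
    have h := congrArg σ hα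
    simp only [map_sub, map_mul, map_pow, map_ofNat, map_natCast, map_intCast, map_zero] at h
    exact h
  have hne : α ≠ σ α := by
    intro hfix
    apply hσ1
    have hhom : (↑σ : K →ₐ[ℚ] K) = AlgHom.id ℚ K := by
      apply AlgHom.ext_of_adjoin_eq_top hgen
      intro z hz
      rcases hz with rfl
      exact hfix.symm
    exact AlgEquiv.ext fun z => by simpa using AlgHom.congr_fun hhom z
  have hq : 3*(α^2 + α*(σ α) + (σ α)^2) = (m:K) := by
    have h0 : (α - σ α) * (27*(α^2 + α*(σ α) + (σ α)^2) - 9*(m:K)) = 0 := by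
      linear_combination hα - hβ
    rcases mul_eq_zero.mp h0 with h | h
    · exact absurd (sub_eq_zero.mp h) hne
    · linear_combination h / 9
  have h4K : 4*(m:K) = (a:K)^2 + 3*(b:K)^2 := by exact_mod_cast hab
  have hkey0 : (3*(m:K)^2) *
      ((((α - σ α)*(2*(m:K) + 9*α*(σ α)))^2 - (m:K)^2*(b:K)^2)) = 0 := by
    linear_combination
      ((2187 : K)*α^8 + (2187 : K)*α^7*(σ α) + (2187 : K)*α^6*(σ α)^2 + (-729 : K)*α^6*(m:K) + (-1458 : K)*α^5*(σ α)*(m:K) + (-1458 : K)*α^4*(σ α)^2*(m:K) + (324 : K)*α^2*(σ α)^2*(m:K)^2 + (-12 : K)*α^2*(m:K)^3 + (9 : K)*α^2*(m:K)^2*(b:K)^2 + (24 : K)*α*(σ α)*(m:K)^3 + (9 : K)*α*(σ α)*(m:K)^2*(b:K)^2 + (-12 : K)*(σ α)^2*(m:K)^3 + (9 : K)*(σ α)^2*(m:K)^2*(b:K)^2 + (3 : K)*(m:K)^3*(b:K)^2) * hq +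
      ((-243 : K)*α^7 + (-486 : K)*α^6*(σ α) + (-729 : K)*α^5*(σ α)^2 + (81 : K)*α^5*(m:K) + (-486 : K)*α^4*(σ α)^3 + (162 : K)*α^4*(σ α)*(m:K) + (-9 : K)*α^4*(m:K)*(a:K) + (-243 : K)*α^3*(σ α)^4 + (243 : K)*α^3*(σ α)^2*(m:K) + (-18 : K)*α^3*(σ α)*(m:K)*(a:K) + (162 : K)*α^2*(σ α)^3*(m:K) + (-27 : K)*α^2*(σ α)^2*(m:K)*(a:K) + (81 : K)*α*(σ α)^4*(m:K) + (-18 : K)*α*(σ α)^3*(m:K)*(a:K) + (-9 : K)*(σ α)^4*(m:K)*(a:K)) * hα +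
      ((9 : K)*α^4*(m:K)^2 + (18 : K)*α^3*(σ α)*(m:K)^2 + (27 : K)*α^2*(σ α)^2*(m:K)^2 + (18 : K)*α*(σ α)^3*(m:K)^2 + (9 : K)*(σ α)^4*(m:K)^2) * h4K
  have hkey : (((α - σ α)*(2*(m:K) + 9*α*(σ α))) - (m:K)*(b:K)) *
      (((α - σ α)*(2*(m:K) + 9*α*(σ α))) + (m:K)*(b:K)) = 0 := by
    have h3 : (3*(m:K)^2) ≠ 0 := mul_ne_zero (by norm_num) (pow_ne_zero _ hMne)
    have h := (mul_eq_zero.mp hkey0).resolve_left h3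
    linear_combination h
  rcases mul_eq_zero.mp hkey with hD | hD
  · -- case (α-σα)(2m+9ασα) = m b
    obtain ⟨A, hA⟩ : ∃ A, a + b = 6*A := ⟨(a+b)/6, by omega⟩
    refine ⟨A, d0, ?_, ?_⟩
    · rw [eq_div_iff (by norm_num : (9:ℚ) ≠ 0)]
      have habQ : 4*(m:ℚ) = (a:ℚ)^2 + 3*(b:ℚ)^2 := by exact_mod_cast hab
      have hAQ : (a:ℚ) = 6*(A:ℚ) - 3*(d0:ℚ) := by exact_mod_cast (by omega : a = 6*A - 3*d0)
      have hBQ : (b:ℚ) = 3*(d0:ℚ) := by exact_mod_cast hd0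
      linear_combination (-1/4 : ℚ)*habQ + ((3*(d0:ℚ) - 6*(A:ℚ) - (a:ℚ))/4)*hAQ +
        ((-9*(d0:ℚ) - 3*(b:ℚ))/4)*hBQ
    · have hAK : (a:K) = 6*(A:K) - 3*(d0:K) := by exact_mod_cast (by omega : a = 6*A - 3*d0)
      have hBK : (b:K) = 3*(d0:K) := by exact_mod_cast hd0
      have hx' : 27*α^3 - 9*(m:K)*α - (6*(A:K) - 3*(d0:K))*(m:K) = 0 := by
        linear_combination hα + (m:K)*hAK
      have hcdK : 9*((A:K)^2 - (A:K)*(d0:K) + (d0:K)^2) = (m:K) := by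
        linear_combination (-1/4 : K)*h4K + ((3*(d0:K) - 6*(A:K) - (a:K))/4)*hAK +
          ((-9*(d0:K) - 3*(b:K))/4)*hBK
      have hDK : (α - σ α)*(2*(m:K) + 9*α*(σ α)) = 3*(m:K)*(d0:K) := by
        linear_combination hD + (m:K)*hBK
      have hvK : (d0:K) ≠ 0 := Int.cast_ne_zero.mpr (by omega)
      exact aux_statement11 α (σ α) (m:K) (A:K) (d0:K) hMne hvK hq hx' hcdK hDK
  · -- case (α-σα)(2m+9ασα) = -m b
    obtain ⟨A, hA⟩ : ∃ A, a - b = 6*A := ⟨(a-b)/6, by omega⟩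
    refine ⟨A, -d0, ?_, ?_⟩
    · rw [eq_div_iff (by norm_num : (9:ℚ) ≠ 0)]
      have habQ : 4*(m:ℚ) = (a:ℚ)^2 + 3*(b:ℚ)^2 := by exact_mod_cast hab
      have hAQ : (a:ℚ) = 6*(A:ℚ) + 3*(d0:ℚ) := by exact_mod_cast (by omega : a = 6*A + 3*d0)
      have hBQ : (b:ℚ) = 3*(d0:ℚ) := by exact_mod_cast hd0
      push_cast
      linear_combination (-1/4 : ℚ)*habQ + ((-3*(d0:ℚ) - 6*(A:ℚ) - (a:ℚ))/4)*hAQ +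
        ((-9*(d0:ℚ) - 3*(b:ℚ))/4)*hBQ
    · have hAK : (a:K) = 6*(A:K) + 3*(d0:K) := by exact_mod_cast (by omega : a = 6*A + 3*d0)
      have hBK : (b:K) = 3*(d0:K) := by exact_mod_cast hd0
      have hneg : ((-d0 : ℤ) : K) = -(d0:K) := by push_cast; ring
      have hx' : 27*α^3 - 9*(m:K)*α - (6*(A:K) - 3*(-(d0:K)))*(m:K) = 0 := by
        linear_combination hα + (m:K)*hAK
      have hcdK : 9*((A:K)^2 - (A:K)*(-(d0:K)) + (-(d0:K))^2) = (m:K) := by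
        linear_combination (-1/4 : K)*h4K + ((-3*(d0:K) - 6*(A:K) - (a:K))/4)*hAK +
          ((-9*(d0:K) - 3*(b:K))/4)*hBK
      have hDK : (α - σ α)*(2*(m:K) + 9*α*(σ α)) = 3*(m:K)*(-(d0:K)) := by
        linear_combination hD - (m:K)*hBK
      have hvK : -(d0:K) ≠ 0 := neg_ne_zero.mpr (Int.cast_ne_zero.mpr (by omega))
      rw [hneg]
      exact aux_statement11 α (σ α) (m:K) (A:K) (-(d0:K)) hMne hvK hq hx' hcdK hDK
end

section
/- Let N be a product of finitely many (one or more) distinct primes, each congruent to 1 modulo 3. Then there exist integers x and y such that x + y + 1 ≡ 0 (mod 3) and N = x² − xy + y². -/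
-- square root of -3 mod p
lemma aux_sqrt_neg3 (p : ℕ) (hp : p.Prime) (h3 : p % 3 = 1) :
    ∃ t : ZMod p, t ^ 2 = -3 := by
  haveI : Fact p.Prime := ⟨hp⟩
  have hdvd : 3 ∣ Fintype.card (ZMod p)ˣ := by
    rw [ZMod.card_units_eq_totient, Nat.totient_prime hp]
    omega
  obtain ⟨z, hz⟩ := exists_prime_orderOf_dvd_card 3 hdvd
  have hz3 : (z : ZMod p) ^ 3 = 1 := by
    have h := pow_orderOf_eq_one z
    rw [hz] at h
    have := congrArg Units.val h
    simpa using this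
  have hz1 : (z : ZMod p) ≠ 1 := by
    intro h
    have : z = 1 := Units.ext h
    rw [this, orderOf_one] at hz
    omega
  have hsum : (z : ZMod p) ^ 2 + z + 1 = 0 := by
    have hfac : ((z : ZMod p) - 1) * ((z : ZMod p) ^ 2 + z + 1) = 0 := by
      have : ((z : ZMod p) - 1) * ((z : ZMod p) ^ 2 + z + 1) = (z:ZMod p)^3 - 1 := by ring
      rw [this, hz3, sub_self]
    rcases mul_eq_zero.mp hfac with h | h
    · exact absurd (by linear_combination h) hz1
    · exact h
  refine ⟨2 * z + 1, ?_⟩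
  linear_combination 4 * hsum

-- Thue's lemma application: p = a^2 + 3 b^2
lemma aux_rep (p : ℕ) (hp : p.Prime) (h3 : p % 3 = 1) :
    ∃ a b : ℤ, (p : ℤ) = a ^ 2 + 3 * b ^ 2 := by
  haveI : Fact p.Prime := ⟨hp⟩
  obtain ⟨t, ht⟩ := aux_sqrt_neg3 p hp h3
  obtain ⟨k, hk⟩ : ∃ k : ℕ, k = Nat.sqrt p := ⟨_, rfl⟩
  have hcard : p < (Finset.range (k+1) ×ˢ Finset.range (k+1)).card := by
    rw [Finset.card_product, Finset.card_range, hk]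
    calc p < (Nat.sqrt p + 1) * (Nat.sqrt p + 1) := Nat.lt_succ_sqrt p
    _ = _ := rfl
  have hc : (Finset.univ : Finset (ZMod p)).card <
      (Finset.range (k+1) ×ˢ Finset.range (k+1)).card := by
    rwa [Finset.card_univ, ZMod.card]
  obtain ⟨⟨a₁, b₁⟩, hmem₁, ⟨a₂, b₂⟩, hmem₂, hne, heq⟩ :=
    Finset.exists_ne_map_eq_of_card_lt_of_maps_to
      (f := fun ab : ℕ × ℕ => (ab.1 : ZMod p) - t * ab.2)
      hc (fun ab _ => Finset.mem_univ _)
  simp only [Finset.mem_product, Finset.mem_range] at hmem₁ hmem₂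
  obtain ⟨x, hxdef⟩ : ∃ x : ℤ, x = (a₁ : ℤ) - a₂ := ⟨_, rfl⟩
  obtain ⟨y, hydef⟩ : ∃ y : ℤ, y = (b₁ : ℤ) - b₂ := ⟨_, rfl⟩
  have hxy0 : ¬ (x = 0 ∧ y = 0) := by
    rintro ⟨hx0, hy0⟩
    apply hne
    have h1 : a₁ = a₂ := by omega
    have h2 : b₁ = b₂ := by omega
    rw [h1, h2]
  have hcast : ((x : ZMod p)) = t * (y : ZMod p) := by
    have h : ((a₁ : ZMod p)) - t * b₁ = (a₂ : ZMod p) - t * b₂ := heq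
    rw [hxdef, hydef]
    push_cast
    linear_combination h
  have hdvd : (p : ℤ) ∣ x ^ 2 + 3 * y ^ 2 := by
    rw [← ZMod.intCast_zmod_eq_zero_iff_dvd]
    push_cast
    rw [hcast]
    linear_combination ((y : ZMod p))^2 * ht
  clear hcast heq ht hc hcard hne
  clear t
  have hx1 : -(k : ℤ) ≤ x := by omega
  have hx2 : x ≤ (k : ℤ) := by omega
  have hy1 : -(k : ℤ) ≤ y := by omega
  have hy2 : y ≤ (k : ℤ) := by omega
  have hxb : x ^ 2 ≤ (k : ℤ) ^ 2 := sq_le_sq' hx1 hx2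
  have hyb : y ^ 2 ≤ (k : ℤ) ^ 2 := sq_le_sq' hy1 hy2
  have hklt : (k : ℤ) ^ 2 < p := by
    have hle : k * k ≤ p := by rw [hk]; exact Nat.sqrt_le p
    have hne' : k * k ≠ p := by
      intro h
      have hkdvd : k ∣ p := ⟨k, h.symm⟩
      have h2 := hp.two_le
      rcases (Nat.Prime.eq_one_or_self_of_dvd hp k hkdvd) with h1 | h1
      · rw [h1] at h; omega
      · rw [h1] at h; nlinarith [h2]
    have hlt : k * k < p := lt_of_le_of_ne hle hne'
    push_cast
    nlinarith [hlt]
  have hub : x ^ 2 + 3 * y ^ 2 < 4 * p := by nlinarith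
  have hpos : 0 < x ^ 2 + 3 * y ^ 2 := by
    rcases not_and_or.mp hxy0 with h | h
    · have : 0 < x ^ 2 := by positivity
      nlinarith [sq_nonneg y]
    · have : 0 < y ^ 2 := by positivity
      nlinarith [sq_nonneg x]
  obtain ⟨m, hm⟩ := hdvd
  have hppos : (0 : ℤ) < p := by exact_mod_cast hp.pos
  have hm13 : m = 1 ∨ m = 2 ∨ m = 3 := by
    have h1 : 0 < m := by
      rcases lt_or_ge 0 m with h | h
      · exact h
      · exfalso
        have h0 : (p : ℤ) * m ≤ 0 := mul_nonpos_of_nonneg_of_nonpos hppos.le h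
        rw [hm] at hpos
        linarith
    have h2 : m < 4 := by
      have hlt : (p : ℤ) * m < (p : ℤ) * 4 := by rw [← hm]; linarith
      exact lt_of_mul_lt_mul_left hlt hppos.le
    omega
  rcases hm13 with rfl | rfl | rfl
  · exact ⟨x, y, by linarith [hm]⟩
  · -- impossible mod 4
    exfalso
    have hpodd : p % 2 = 1 := by
      rcases hp.eq_two_or_odd with h | h
      · omega
      · exact h
    have hkey : ∀ u v : ZMod 4, u ^ 2 + 3 * v ^ 2 ≠ 2 := by decide
    have hp4 : p % 4 = 1 ∨ p % 4 = 3 := by omega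
    have hcast4 : ((x : ZMod 4)) ^ 2 + 3 * (y : ZMod 4) ^ 2 = 2 := by
      have hcc := congrArg (fun n : ℤ => (n : ZMod 4)) hm
      push_cast at hcc
      rw [hcc]
      have hpz : ((p : ℕ) : ZMod 4) = 1 ∨ ((p : ℕ) : ZMod 4) = 3 := by
        rcases hp4 with h | h
        · left; rw [← ZMod.natCast_mod, h]; rfl
        · right; rw [← ZMod.natCast_mod, h]; rfl
      rcases hpz with h | h <;> rw [h] <;> decide
    exact hkey _ _ hcast4
  · -- 3 | x, then p = y^2 + 3*c^2
    have h3p : Prime (3 : ℤ) := Int.prime_three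
    have h3x : (3 : ℤ) ∣ x := by
      apply h3p.dvd_of_dvd_pow (n := 2)
      have hd : (3:ℤ) ∣ x ^ 2 + 3 * y ^ 2 := ⟨p, by linarith [hm]⟩
      omega
    obtain ⟨c, rfl⟩ := h3x
    refine ⟨y, c, ?_⟩
    have h9 : (3 * c) ^ 2 = 9 * c ^ 2 := by ring
    rw [h9] at hm
    linarith

/-- Let `N` be a product of finitely many (one or more) distinct
primes, each congruent to `1` modulo `3`.  Then there exist integers `x, y` with
`x + y + 1 ≡ 0 (mod 3)` and `N = x² − xy + y²`. -/
theorem statement12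
    (r : ℕ) (hr : 1 ≤ r)
    (p : Fin r → ℕ) (hpprime : ∀ i, Nat.Prime (p i))
    (hpmod : ∀ i, p i % 3 = 1) (hpinj : Function.Injective p)
    (N : ℕ) (hN : N = ∏ i, p i) :
    ∃ x y : ℤ, (x + y + 1) % 3 = 0 ∧ (N : ℤ) = x ^ 2 - x * y + y ^ 2 := by
  -- Step 1: N is representable by the form
  have key : ∃ a b : ℤ, (N : ℤ) = a ^ 2 - a * b + b ^ 2 := by
    subst hN
    push_cast
    refine Finset.prod_induction (fun i => ((p i : ℤ)))
      (fun n => ∃ a b : ℤ, n = a ^ 2 - a * b + b ^ 2) ?_ ⟨1, 0, by ring⟩ ?_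
    · rintro n₁ n₂ ⟨a, b, rfl⟩ ⟨u, v, rfl⟩
      exact ⟨a * u - b * v, a * v + b * u - b * v, by ring⟩
    · intro i _
      obtain ⟨a, b, hab⟩ := aux_rep (p i) (hpprime i) (hpmod i)
      exact ⟨a + b, 2 * b, by rw [hab]; ring⟩
  -- Step 2: N ≡ 1 mod 3
  have hN3 : N % 3 = 1 := by
    subst hN
    rw [Finset.prod_nat_mod]
    simp only [hpmod]
    rw [Finset.prod_const_one]
    rfl
  obtain ⟨a, b, hab⟩ := key
  -- Step 3: fix the sign so that a + b ≡ 2 mod 3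
  have c3 : (3 : ZMod 3) = 0 := by decide
  have hu : ((a + b : ℤ) : ZMod 3) ^ 2 = 1 := by
    have h1 : ((N : ℕ) : ZMod 3) = 1 := by
      rw [← ZMod.natCast_mod, hN3]
      rfl
    have := congrArg (fun n : ℤ => (n : ZMod 3)) hab
    push_cast at this ⊢
    rw [h1] at this
    linear_combination -this + (a : ZMod 3) * (b : ZMod 3) * c3
  have hcases : ((a + b : ℤ) : ZMod 3) = 1 ∨ ((a + b : ℤ) : ZMod 3) = 2 := by
    have h : ∀ u : ZMod 3, u ^ 2 = 1 → u = 1 ∨ u = 2 := by decide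
    exact h _ hu
  have hmod : ∀ z : ℤ, ((z : ZMod 3) = 0) → z % 3 = 0 := by
    intro z hz
    have := (ZMod.intCast_zmod_eq_zero_iff_dvd z 3).mp hz
    omega
  rcases hcases with h | h
  · refine ⟨-a, -b, ?_, by rw [hab]; ring⟩
    apply hmod
    push_cast at h ⊢
    linear_combination -h
  · refine ⟨a, b, ?_, hab⟩
    apply hmod
    push_cast at h ⊢
    linear_combination h + c3
end
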